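/- For every admissible tensor F on V, F(φx,y,z) = (1/4)[N(x,y,z) + N(x,z,y) + N̂(x,y,z) + N̂(x,z,y)] holds for all x,y,z ∈ V, where N and N̂ are the Nijenhuis tensor and the associated Nijenhuis tensor of F. -/
import Mathlib


open scoped RealInnerProductSpace

noncomputable section

/-- An almost paracontact almost paracomplex structure compatible with the inner
product on a real inner product space `V` of dimension `2 * n + 1`. -/
structure APAP (n : ℕ) (V : Type*) [NormedAddCommGroup V] [InnerProductSpace ℝ V] where
  phi : V →ₗ[ℝ] V
  xi : V
  eta : V →ₗ[ℝ] ℝ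
  dim_eq : Module.finrank ℝ V = 2 * n + 1
  phi_xi : phi xi = 0
  phi_phi : ∀ x : V, phi (phi x) = x - eta x • xi
  eta_phi : ∀ x : V, eta (phi x) = 0
  eta_xi : eta xi = 1
  trace_phi : LinearMap.trace ℝ V phi = 0
  compat : ∀ x y : V, ⟪phi x, phi y⟫ = ⟪x, y⟫ - eta x * eta y
  inner_xi : ∀ x : V, ⟪x, xi⟫ = eta x

variable {n : ℕ} {V : Type*} [NormedAddCommGroup V] [InnerProductSpace ℝ V]

/-- The defining symmetries of the fundamental tensor `F`. -/
def APAP.Admissible (S : APAP n V) (F : V →ₗ[ℝ] V →ₗ[ℝ] V →ₗ[ℝ] ℝ) : Prop :=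
  (∀ x y z : V, F x y z = F x z y) ∧
  (∀ x y z : V, F x y z =
    -F x (S.phi y) (S.phi z) + S.eta y * F x S.xi z + S.eta z * F x y S.xi)

/-- The Nijenhuis tensor of `F`. -/
def APAP.nij (S : APAP n V) (F : V →ₗ[ℝ] V →ₗ[ℝ] V →ₗ[ℝ] ℝ) (x y z : V) : ℝ :=
  F (S.phi x) y z - F (S.phi y) x z - F x y (S.phi z) + F y x (S.phi z)
    + S.eta z * (F x (S.phi y) S.xi - F y (S.phi x) S.xi)

/-- The associated Nijenhuis tensor of `F`. -/
def APAP.nijA (S : APAP n V) (F : V →ₗ[ℝ] V →ₗ[ℝ] V →ₗ[ℝ] ℝ) (x y z : V) : ℝ :=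
  F (S.phi x) y z + F (S.phi y) x z - F x y (S.phi z) - F y x (S.phi z)
    + S.eta z * (F x (S.phi y) S.xi + F y (S.phi x) S.xi)

/-- `F(φx,y,z)` in terms of the pair of Nijenhuis tensors. -/
theorem statement2 (hn : 1 ≤ n) (S : APAP n V) (F : V →ₗ[ℝ] V →ₗ[ℝ] V →ₗ[ℝ] ℝ)
    (hF : S.Admissible F) :
    ∀ x y z : V, F (S.phi x) y z =
      (1 / 4) * (S.nij F x y z + S.nij F x z y + S.nijA F x y z + S.nijA F x z y) := by
  intro x y z
  obtain ⟨hsym, hadm⟩ := hF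
  have key : ∀ a b : V, F x (S.phi a) b + F x a (S.phi b)
      = S.eta a * F x S.xi (S.phi b) + S.eta b * F x (S.phi a) S.xi := by
    intro a b
    have h := hadm x (S.phi a) b
    rw [S.phi_phi a, S.eta_phi a] at h
    have hmap : F x (a - S.eta a • S.xi) (S.phi b)
        = F x a (S.phi b) - S.eta a * F x S.xi (S.phi b) := by
      simp [map_sub, map_smul, smul_eq_mul, mul_comm]
    rw [hmap] at h
    linarith
  have k1 := key y z
  have k2 := key z y
  have s1 := hsym (S.phi x) y z
  have s2 := hsym x (S.phi y) z
  have s3 := hsym x (S.phi z) y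
  have s4 := hsym x S.xi (S.phi y)
  have s5 := hsym x S.xi (S.phi z)
  simp only [APAP.nij, APAP.nijA]
  linear_combination (1/2)*s1 + (1/2)*k1 - (1/2)*s2 + (S.eta y/2)*s5
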